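/- Let X be a Banach space and (X_k)_{k≥1} a representing system of subspaces of X. Then there exists ε > 0 such that for every sequential partition π = {I_k} of ℕ into consecutive intervals, and every continuous linear functional φ ∈ X*, one has Σ_k ‖φ restricted to the closed linear span of {X_i : i ∈ I_k}‖ ≥ ε‖φ‖. -/

import Mathlib

open Filter Finset
open BoundedContinuousFunction

/-- `S = (X_k)` is a representing system of subspaces. -/
def IsRSS {E : Type*} [NormedAddCommGroup E] [NormedSpace ℝ E]
    (X : ℕ → Submodule ℝ E) : Prop :=
  ∀ x : E, ∃ f : ℕ → E, (∀ k, f k ∈ X k) ∧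
    Tendsto (fun n => ∑ k ∈ Finset.range n, f k) atTop (nhds x)

/-- `c : ℕ → ℕ` encodes a sequential partition of `ℕ` into consecutive intervals:
`c i` is the index of the block containing `i`.  The blocks are `{i | c i = k}`.
This encodes both partitions into infinitely many finite consecutive intervals and
partitions into finitely many intervals, the last one infinite. -/
def IsSequentialPartition (c : ℕ → ℕ) : Prop :=
  Monotone c ∧ c 0 = 0 ∧ ∀ i, c (i + 1) ≤ c i + 1

/-- Restriction of a functional `φ` to the closed linear span of the subspaces `X_i`,
`i` in the `k`-th block of the partition `c`. -/
noncomputable def restrictedNorm {E : Type*} [NormedAddCommGroup E] [NormedSpace ℝ E]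
    (X : ℕ → Submodule ℝ E) (c : ℕ → ℕ) (k : ℕ) (φ : E →L[ℝ] ℝ) : ℝ :=
  ‖φ.comp (Submodule.subtypeL ((⨆ i ∈ {i | c i = k}, X i).topologicalClosure))‖

section Aux

variable {E : Type*} [NormedAddCommGroup E] [NormedSpace ℝ E]

/-- The space of representations: a point `x` together with the (bounded) sequence of
partial sums of a series converging to `x` with terms in the `X k`. -/
def repSpace (X : ℕ → Submodule ℝ E) : Submodule ℝ (E × (ℕ →ᵇ E)) where
  carrier := {p | p.2 0 = 0 ∧ (∀ k, p.2 (k + 1) - p.2 k ∈ X k) ∧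
    Tendsto (fun n => p.2 n) atTop (nhds p.1)}
  zero_mem' := by
    refine ⟨rfl, fun k => ?_, ?_⟩
    · simp
    · simpa using tendsto_const_nhds
  add_mem' := by
    rintro p q ⟨hp0, hpX, hpt⟩ ⟨hq0, hqX, hqt⟩
    refine ⟨?_, fun k => ?_, ?_⟩
    · show (p.2 + q.2) 0 = 0
      simp [hp0, hq0]
    · show (p.2 + q.2) (k + 1) - (p.2 + q.2) k ∈ X k
      have h : (p.2 + q.2) (k + 1) - (p.2 + q.2) k
          = (p.2 (k + 1) - p.2 k) + (q.2 (k + 1) - q.2 k) := by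
        simp only [BoundedContinuousFunction.coe_add, Pi.add_apply]; abel
      rw [h]
      exact (X k).add_mem (hpX k) (hqX k)
    · show Tendsto (fun n => (p.2 + q.2) n) atTop (nhds (p.1 + q.1))
      simpa using hpt.add hqt
  smul_mem' := by
    rintro a p ⟨hp0, hpX, hpt⟩
    refine ⟨?_, fun k => ?_, ?_⟩
    · show (a • p.2) 0 = 0
      simp [hp0]
    · show (a • p.2) (k + 1) - (a • p.2) k ∈ X k
      have h : (a • p.2) (k + 1) - (a • p.2) k = a • (p.2 (k + 1) - p.2 k) := by
        simp [smul_sub]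
      rw [h]
      exact (X k).smul_mem a (hpX k)
    · show Tendsto (fun n => (a • p.2) n) atTop (nhds (a • p.1))
      simpa using hpt.const_smul a

theorem mem_repSpace {X : ℕ → Submodule ℝ E} {p : E × (ℕ →ᵇ E)} :
    p ∈ repSpace X ↔ p.2 0 = 0 ∧ (∀ k, p.2 (k + 1) - p.2 k ∈ X k) ∧
      Tendsto (fun n => p.2 n) atTop (nhds p.1) := Iff.rfl

theorem isClosed_repSpace (X : ℕ → Submodule ℝ E) (hX : ∀ k, IsClosed (X k : Set E)) :
    IsClosed ((repSpace X : Submodule ℝ (E × (ℕ →ᵇ E))) : Set (E × (ℕ →ᵇ E))) := by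
  have hev : ∀ n : ℕ, Continuous fun p : E × (ℕ →ᵇ E) => p.2 n := fun n =>
    (continuous_eval_const n).comp continuous_snd
  have h1 : IsClosed {p : E × (ℕ →ᵇ E) | p.2 0 = 0} :=
    isClosed_singleton.preimage (hev 0)
  have h2 : ∀ k, IsClosed {p : E × (ℕ →ᵇ E) | p.2 (k + 1) - p.2 k ∈ X k} := fun k =>
    (hX k).preimage ((hev (k + 1)).sub (hev k))
  have h3 : IsClosed {p : E × (ℕ →ᵇ E) | Tendsto (fun n => p.2 n) atTop (nhds p.1)} := by
    apply IsSeqClosed.isClosed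
    intro u p hu hup
    simp only [Set.mem_setOf_eq] at hu ⊢
    rw [Metric.tendsto_atTop]
    intro ε hε
    obtain ⟨J, hJ⟩ := (Metric.tendsto_atTop.1 hup) (ε / 3) (by positivity)
    have hJp : dist (u J) p < ε / 3 := hJ J le_rfl
    obtain ⟨N, hN⟩ := (Metric.tendsto_atTop.1 (hu J)) (ε / 3) (by positivity)
    refine ⟨N, fun n hn => ?_⟩
    have e1 : dist (p.2 n) ((u J).2 n) ≤ dist p (u J) := by
      calc dist (p.2 n) ((u J).2 n) ≤ dist p.2 (u J).2 :=
            BoundedContinuousFunction.dist_coe_le_dist n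
        _ ≤ dist p (u J) := by rw [Prod.dist_eq]; exact le_max_right _ _
    have e2 : dist ((u J).1) p.1 ≤ dist (u J) p := by
      rw [Prod.dist_eq]; exact le_max_left _ _
    calc dist (p.2 n) p.1 ≤ dist (p.2 n) ((u J).2 n) + dist ((u J).2 n) ((u J).1)
          + dist ((u J).1) p.1 := dist_triangle4 _ _ _ _
      _ < ε / 3 + ε / 3 + ε / 3 := by
          have := hN n hn
          have h1' : dist (p.2 n) ((u J).2 n) < ε / 3 := by
            calc dist (p.2 n) ((u J).2 n) ≤ dist p (u J) := e1
              _ = dist (u J) p := dist_comm _ _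
              _ < ε / 3 := hJp
          have h3' : dist ((u J).1) p.1 < ε / 3 := lt_of_le_of_lt e2 hJp
          gcongr
      _ = ε := by ring
  have hset : ((repSpace X : Submodule ℝ (E × (ℕ →ᵇ E))) : Set (E × (ℕ →ᵇ E)))
      = {p : E × (ℕ →ᵇ E) | p.2 0 = 0} ∩ ((⋂ k, {p : E × (ℕ →ᵇ E) | p.2 (k + 1) - p.2 k ∈ X k})
        ∩ {p : E × (ℕ →ᵇ E) | Tendsto (fun n => p.2 n) atTop (nhds p.1)}) := by
    ext p
    simp only [SetLike.mem_coe, mem_repSpace, Set.mem_inter_iff, Set.mem_iInter, Set.mem_setOf_eq]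
  rw [hset]
  exact h1.inter ((isClosed_iInter h2).inter h3)

end Aux

set_option maxHeartbeats 1000000 in
set_option synthInstance.maxHeartbeats 1000000 in
/-- If `(X_k)` is a representing system of subspaces, then there is `ε > 0` such that for
every sequential partition `π = {I_k}` of `ℕ` and every `φ ∈ X*`,
`Σ_k ‖φ^(S, I_k)‖ ≥ ε ‖φ‖` (the sum taken in `[0, ∞]`). -/
theorem rss_sequential_partition_inequality {E : Type*} [NormedAddCommGroup E]
    [NormedSpace ℝ E] [CompleteSpace E] (X : ℕ → Submodule ℝ E)
    (hX : ∀ k, IsClosed (X k : Set E)) (hS : IsRSS X) :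
    ∃ ε : ℝ, 0 < ε ∧ ∀ c : ℕ → ℕ, IsSequentialPartition c → ∀ φ : E →L[ℝ] ℝ,
      ENNReal.ofReal (ε * ‖φ‖) ≤ ∑' k : ℕ, ENNReal.ofReal (restrictedNorm X c k φ) := by
  classical
  haveI : CompleteSpace (repSpace X (E := E)) := (isClosed_repSpace X hX).completeSpace_coe
  set T : repSpace X (E := E) →L[ℝ] E :=
    (ContinuousLinearMap.fst ℝ E (ℕ →ᵇ E)).comp (repSpace X).subtypeL with hT
  have hTsurj : Function.Surjective T := by
    intro x
    obtain ⟨f, hf, hft⟩ := hS x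
    set g : ℕ → E := fun n => ∑ k ∈ Finset.range n, f k with hg
    have hgc : CauchySeq g := hft.cauchySeq
    obtain ⟨R, hR, hRd⟩ := cauchySeq_bdd hgc
    have hM : ∀ n, ‖g n‖ ≤ ‖g 0‖ + R := by
      intro n
      calc ‖g n‖ = ‖g 0 + (g n - g 0)‖ := by rw [add_sub_cancel]
        _ ≤ ‖g 0‖ + ‖g n - g 0‖ := norm_add_le _ _
        _ ≤ ‖g 0‖ + R := by
            have := (hRd n 0).le
            rw [dist_eq_norm] at this
            linarith
    set G : ℕ →ᵇ E := BoundedContinuousFunction.ofNormedAddCommGroup g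
      continuous_of_discreteTopology (‖g 0‖ + R) hM with hG
    have hGapp : ∀ n, G n = g n := fun n => rfl
    have hmem : (x, G) ∈ repSpace X := by
      refine ⟨?_, fun k => ?_, ?_⟩
      · show G 0 = 0
        rw [hGapp]; simp [hg]
      · show G (k + 1) - G k ∈ X k
        rw [hGapp, hGapp]
        have : g (k + 1) - g k = f k := by
          simp [hg, Finset.sum_range_succ]
        rw [this]; exact hf k
      · show Tendsto (fun n => G n) atTop (nhds x)
        simpa [hGapp] using hft
    exact ⟨⟨(x, G), hmem⟩, rfl⟩
  obtain ⟨C, hC0, hC⟩ := T.exists_preimage_norm_le hTsurj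
  refine ⟨1 / (2 * C), by positivity, ?_⟩
  intro c hc φ
  set r : ℕ → ℝ := fun k => restrictedNorm X c k φ with hr
  have hr0 : ∀ k, 0 ≤ r k := by
    intro k
    show 0 ≤ restrictedNorm X c k φ
    unfold restrictedNorm
    exact norm_nonneg (φ.comp (Submodule.subtypeL
      ((⨆ i ∈ {i | c i = k}, X i).topologicalClosure)))
  by_cases htop : (∑' k : ℕ, ENNReal.ofReal (r k)) = ⊤
  · rw [htop]; exact le_top
  -- summability and the real sum
  have hsummable : Summable r := by
    have h1 : Summable fun k => (r k).toNNReal := by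
      rw [← ENNReal.tsum_coe_ne_top_iff_summable]
      simpa [ENNReal.ofReal] using htop
    have h2 := NNReal.summable_coe.2 h1
    exact h2.congr fun k => Real.coe_toNNReal _ (hr0 k)
  set s : ℝ := ∑' k, r k with hs
  have hs0 : 0 ≤ s := tsum_nonneg hr0
  -- membership-norm estimate
  have hφS : ∀ k (v : E), v ∈ (⨆ i ∈ {i | c i = k}, X i).topologicalClosure →
      |φ v| ≤ r k * ‖v‖ := by
    intro k v hv
    have h := (φ.comp (Submodule.subtypeL
      ((⨆ i ∈ {i | c i = k}, X i).topologicalClosure))).le_opNorm ⟨v, hv⟩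
    rw [← Real.norm_eq_abs]
    exact h
  have hcmono := hc.1
  have hc0 := hc.2.1
  have hcstep := hc.2.2
  have hci : ∀ i, c i ≤ i := by
    intro i
    induction i with
    | zero => simp [hc0]
    | succ n ih => exact le_trans (hcstep n) (by omega)
  -- key pointwise estimate
  have key : ∀ x : E, |φ x| ≤ 2 * C * s * ‖x‖ := by
    intro x
    obtain ⟨z, hzT, hzn⟩ := hC x
    obtain ⟨h0, hXmem, hlim⟩ := z.2
    set g : ℕ →ᵇ E := (z : E × (ℕ →ᵇ E)).2 with hgdef
    have hz1 : (z : E × (ℕ →ᵇ E)).1 = x := hzT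
    rw [hz1] at hlim
    have hgb : ∀ n, ‖g n‖ ≤ C * ‖x‖ := fun n =>
      (g.norm_coe_le_norm n).trans ((norm_snd_le _).trans (by rw [← Submodule.coe_norm]; exact hzn))
    have hxb : ‖x‖ ≤ C * ‖x‖ :=
      le_of_tendsto hlim.norm (Eventually.of_forall hgb)
    set f : ℕ → E := fun k => g (k + 1) - g k with hfdef
    set u : ℕ → E := fun k => if h : ∃ i, k ≤ c i then g (Nat.find h) else x with hu
    have hu0 : u 0 = 0 := by
      have h : ∃ i, 0 ≤ c i := ⟨0, Nat.zero_le _⟩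
      have hfind : Nat.find h = 0 := (Nat.find_eq_zero h).2 (Nat.zero_le _)
      simp only [hu, dif_pos h, hfind]
      exact h0
    have hub : ∀ k, ‖u k‖ ≤ C * ‖x‖ := by
      intro k
      by_cases h : ∃ i, k ≤ c i
      · simp only [hu, dif_pos h]; exact hgb _
      · simp only [hu, dif_neg h]; exact hxb
    -- the index function n k K
    set nn : ℕ → ℕ → ℕ := fun k K => if h : ∃ i, k ≤ c i then min (Nat.find h) K else K with hnn
    have hfilt : ∀ k K, (Finset.range K).filter (fun i => c i < k) = Finset.range (nn k K) := by
      intro k K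
      ext i
      simp only [Finset.mem_filter, Finset.mem_range]
      by_cases h : ∃ i, k ≤ c i
      · simp only [hnn, dif_pos h, lt_min_iff]
        constructor
        · rintro ⟨hiK, hik⟩
          refine ⟨?_, hiK⟩
          by_contra hle
          push_neg at hle
          exact absurd (le_trans (Nat.find_spec h) (hcmono hle)) (by omega)
        · rintro ⟨hit, hiK⟩
          refine ⟨hiK, ?_⟩
          have := Nat.find_min h hit
          omega
      · simp only [hnn, dif_neg h]
        push_neg at h
        constructor
        · rintro ⟨hiK, _⟩; exact hiK
        · intro hiK; exact ⟨hiK, h i⟩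
    have hQg : ∀ k K, ∑ i ∈ (Finset.range K).filter (fun i => c i < k), f i = g (nn k K) := by
      intro k K
      rw [hfilt]
      have h := Finset.sum_range_sub (fun i => g i) (nn k K)
      rw [show g 0 = 0 from h0, sub_zero] at h
      exact h
    -- P k K : block partial sums
    have hPmem : ∀ k K, ∑ i ∈ (Finset.range K).filter (fun i => c i = k), f i
        ∈ (⨆ i ∈ {i | c i = k}, X i).topologicalClosure := by
      intro k K
      apply Submodule.le_topologicalClosure _
      apply Submodule.sum_mem
      intro i hi
      rw [Finset.mem_filter] at hi
      apply Submodule.mem_iSup_of_mem i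
      apply Submodule.mem_iSup_of_mem hi.2
      exact hXmem i
    have hPQ : ∀ k K, ∑ i ∈ (Finset.range K).filter (fun i => c i = k), f i
        = g (nn (k + 1) K) - g (nn k K) := by
      intro k K
      have hsub : (Finset.range K).filter (fun i => c i < k)
          ⊆ (Finset.range K).filter (fun i => c i < k + 1) := by
        intro i hi
        simp only [Finset.mem_filter, Finset.mem_range] at hi ⊢
        omega
      have hdiff : (Finset.range K).filter (fun i => c i = k)
          = (Finset.range K).filter (fun i => c i < k + 1)
            \ (Finset.range K).filter (fun i => c i < k) := by
        ext i
        simp only [Finset.mem_sdiff, Finset.mem_filter, Finset.mem_range]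
        omega
      rw [hdiff, Finset.sum_sdiff_eq_sub hsub, hQg, hQg]
    -- limits of g ∘ nn k
    have hnlim : ∀ k, Tendsto (fun K => g (nn k K)) atTop (nhds (u k)) := by
      intro k
      by_cases h : ∃ i, k ≤ c i
      · have : ∀ K ≥ Nat.find h, g (nn k K) = u k := by
          intro K hK
          simp only [hnn, hu, dif_pos h, min_eq_left hK]
        exact tendsto_atTop_of_eventually_const this
      · have heq : ∀ K, g (nn k K) = g K := by intro K; simp only [hnn, dif_neg h]
        simp only [hu, dif_neg h, heq]
        exact hlim
    -- y k ∈ S k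
    have hymem : ∀ k, u (k + 1) - u k ∈ (⨆ i ∈ {i | c i = k}, X i).topologicalClosure := by
      intro k
      have hlim' : Tendsto (fun K => g (nn (k + 1) K) - g (nn k K)) atTop
          (nhds (u (k + 1) - u k)) := (hnlim (k + 1)).sub (hnlim k)
      exact (Submodule.isClosed_topologicalClosure _).mem_of_tendsto hlim'
        (Eventually.of_forall fun K => by rw [← hPQ]; exact hPmem k K)
    have hyb : ∀ k, |φ (u (k + 1) - u k)| ≤ r k * (2 * (C * ‖x‖)) := by
      intro k
      calc |φ (u (k + 1) - u k)| ≤ r k * ‖u (k + 1) - u k‖ := hφS k _ (hymem k)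
        _ ≤ r k * (2 * (C * ‖x‖)) := by
            apply mul_le_mul_of_nonneg_left _ (hr0 k)
            calc ‖u (k + 1) - u k‖ ≤ ‖u (k + 1)‖ + ‖u k‖ := norm_sub_le _ _
              _ ≤ C * ‖x‖ + C * ‖x‖ := add_le_add (hub _) (hub _)
              _ = 2 * (C * ‖x‖) := by ring
    -- u K → x
    have hux : Tendsto u atTop (nhds x) := by
      by_cases hall : ∀ k, ∃ i, k ≤ c i
      · have hueq : ∀ k, u k = g (Nat.find (hall k)) := fun k => dif_pos (hall k)
        have htt : Tendsto (fun k => Nat.find (hall k)) atTop atTop := by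
          apply tendsto_atTop_mono (fun k => ?_) tendsto_id
          exact le_trans (le_trans (Nat.find_spec (hall k)) (hci _)) le_rfl
        have := hlim.comp htt
        exact this.congr fun k => (hueq k).symm
      · push_neg at hall
        obtain ⟨k₀, hk₀⟩ := hall
        apply tendsto_atTop_of_eventually_const (i₀ := k₀)
        intro K hK
        have : ¬∃ i, K ≤ c i := by
          push_neg
          intro i
          exact lt_of_lt_of_le (hk₀ i) hK
        simp only [hu, dif_neg this]
    -- telescoping and the bound
    have hpart : ∀ K, φ (u K) = ∑ k ∈ Finset.range K, φ (u (k + 1) - u k) := by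
      intro K
      have h := Finset.sum_range_sub u K
      rw [hu0, sub_zero] at h
      rw [← map_sum, h]
    have hbound : ∀ K, |φ (u K)| ≤ 2 * C * s * ‖x‖ := by
      intro K
      rw [hpart]
      calc |∑ k ∈ Finset.range K, φ (u (k + 1) - u k)|
          ≤ ∑ k ∈ Finset.range K, |φ (u (k + 1) - u k)| := Finset.abs_sum_le_sum_abs _ _
        _ ≤ ∑ k ∈ Finset.range K, r k * (2 * (C * ‖x‖)) :=
            Finset.sum_le_sum fun k _ => hyb k
        _ = (∑ k ∈ Finset.range K, r k) * (2 * (C * ‖x‖)) := by rw [Finset.sum_mul]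
        _ ≤ s * (2 * (C * ‖x‖)) := by
            apply mul_le_mul_of_nonneg_right _ (by positivity)
            exact Summable.sum_le_tsum _ (fun k _ => hr0 k) hsummable
        _ = 2 * C * s * ‖x‖ := by ring
    have : Tendsto (fun K => |φ (u K)|) atTop (nhds |φ x|) :=
      ((φ.continuous.tendsto x).comp hux).abs
    exact le_of_tendsto this (Eventually.of_forall hbound)
  -- conclude
  have hφn : ‖φ‖ ≤ 2 * C * s := by
    apply φ.opNorm_le_bound (by positivity)
    intro x
    rw [Real.norm_eq_abs]
    exact key x
  have hfin : 1 / (2 * C) * ‖φ‖ ≤ s := by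
    rw [div_mul_eq_mul_div, one_mul, div_le_iff₀ (by positivity)]
    calc ‖φ‖ ≤ 2 * C * s := hφn
      _ = s * (2 * C) := by ring
  calc ENNReal.ofReal (1 / (2 * C) * ‖φ‖) ≤ ENNReal.ofReal s := ENNReal.ofReal_le_ofReal hfin
    _ = ∑' k, ENNReal.ofReal (r k) := ENNReal.ofReal_tsum_of_nonneg hr0 hsummable
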